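/- Let G be a simple graph with maximum degree Δ ≥ 3 containing two adjacent vertices u and v both of degree 2. If G − u admits a (Δ+2, 2)-incidence coloring, then G admits a (Δ+2, 2)-incidence coloring. -/

import Mathlib

/-- An incidence of `G` is a pair `(v, vw)` with `G.Adj v w`, encoded as the ordered pair
`(v, w)`.  Two incidences `(v, vw)` and `(v', v'w')` are adjacent if `v = v'`, `w = v'`
or `v = w'`.  A `(k, l)`-incidence coloring is a proper coloring of the incidences with at
most `k` colors such that for every vertex `v` at most `l` colors appear on the incoming
incidences `(u, uv)`. -/
def IsIncColoring {V : Type*} (G : SimpleGraph V) (k l : ℕ) (c : V → V → Fin k) : Prop :=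
  (∀ v w v' w' : V, G.Adj v w → G.Adj v' w' → (v, w) ≠ (v', w') →
      (v = v' ∨ w = v' ∨ v = w') → c v w ≠ c v' w') ∧
  (∀ v : V, {x : Fin k | ∃ u, G.Adj u v ∧ c u v = x}.ncard ≤ l)

/-- `G` has a `(k, l)`-incidence coloring. -/
def HasIncColoring {V : Type*} (G : SimpleGraph V) (k l : ℕ) : Prop :=
  ∃ c : V → V → Fin k, IsIncColoring G k l c

/-- A graph is outerplanar iff it has a one-page book embedding: the vertices can be placed
(injectively) on a line so that no two edges interleave. -/
def Outerplanar {V : Type*} (G : SimpleGraph V) : Prop :=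
  ∃ f : V → ℝ, Function.Injective f ∧
    ∀ a b c d : V, G.Adj a b → G.Adj c d →
      ¬(f a < f c ∧ f c < f b ∧ f b < f d)

lemma exists_not_mem_of_ncard_lt {k : ℕ} (S : Set (Fin k)) (h : S.ncard < k) :
    ∃ x, x ∉ S := by
  by_contra hc
  push_neg at hc
  have : S = Set.univ := Set.eq_univ_of_forall hc
  rw [this, Set.ncard_univ, Nat.card_eq_fintype_card, Fintype.card_fin] at h
  omega

lemma two_neighbors {V : Type*} [Fintype V] [DecidableEq V] (G : SimpleGraph V)
    [DecidableRel G.Adj] (x y : V) (h : G.degree x = 2) (hxy : G.Adj x y) :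
    ∃ z, G.Adj x z ∧ z ≠ y ∧ ∀ t, G.Adj x t → t = y ∨ t = z := by
  have hy : y ∈ G.neighborFinset x := by simpa using hxy
  have hcard : ((G.neighborFinset x).erase y).card = 1 := by
    rw [Finset.card_erase_of_mem hy, G.card_neighborFinset_eq_degree, h]
  obtain ⟨z, hz⟩ := Finset.card_eq_one.mp hcard
  have hzmem : z ∈ (G.neighborFinset x).erase y := by simp [hz]
  refine ⟨z, ?_, (Finset.mem_erase.mp hzmem).1, ?_⟩
  · simpa using (Finset.mem_erase.mp hzmem).2
  · intro t ht
    by_cases hty : t = y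
    · exact Or.inl hty
    · have : t ∈ (G.neighborFinset x).erase y := by simp [hty, ht]
      right; simpa [hz] using this

/-- If Δ ≥ 3, u and v are adjacent vertices of degree 2, and G - u has a
(Δ+2,2)-incidence coloring, then so does G. -/
theorem stmt_5 {V : Type*} [Fintype V] [DecidableEq V] (G : SimpleGraph V)
    [DecidableRel G.Adj] (u v : V) (hΔ : 3 ≤ G.maxDegree)
    (huv : G.Adj u v) (hdu : G.degree u = 2) (hdv : G.degree v = 2)
    (h : HasIncColoring (G.induce {x | x ≠ u}) (G.maxDegree + 2) 2) :
    HasIncColoring G (G.maxDegree + 2) 2 := by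
  classical
  obtain ⟨c, hc1, hc2⟩ := h
  obtain ⟨w, hw, hwv, hNu⟩ := two_neighbors G u v hdu huv
  obtain ⟨z, hz, hzu, hNv⟩ := two_neighbors G v u hdv huv.symm
  have hvu : v ≠ u := huv.ne'
  have hwu : w ≠ u := hw.ne'
  have hzv : z ≠ v := hz.ne'
  have hvU : v ∈ {x : V | x ≠ u} := hvu
  have hwU : w ∈ {x : V | x ≠ u} := hwu
  have hzU : z ∈ {x : V | x ≠ u} := hzu
  obtain ⟨α, hα⟩ : ∃ α, α = c ⟨v, hvU⟩ ⟨z, hzU⟩ := ⟨_, rfl⟩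
  obtain ⟨β, hβ⟩ : ∃ β, β = c ⟨z, hzU⟩ ⟨v, hvU⟩ := ⟨_, rfl⟩
  have hwmem : u ∈ G.neighborFinset w := by simpa using hw.symm
  obtain ⟨O, hOdef⟩ : ∃ O : Finset (Fin (G.maxDegree + 2)),
      O = ((G.neighborFinset w).erase u).attach.image
        (fun x => c ⟨w, hwU⟩ ⟨x.1, (Finset.mem_erase.mp x.2).1⟩) := ⟨_, rfl⟩
  have hOcard : O.card ≤ G.maxDegree - 1 := by
    rw [hOdef]
    calc (((G.neighborFinset w).erase u).attach.image _).card
        ≤ ((G.neighborFinset w).erase u).attach.card := Finset.card_image_le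
      _ = ((G.neighborFinset w).erase u).card := Finset.card_attach
      _ = G.degree w - 1 := by
          rw [Finset.card_erase_of_mem hwmem, G.card_neighborFinset_eq_degree]
      _ ≤ G.maxDegree - 1 := Nat.sub_le_sub_right (G.degree_le_maxDegree w) 1
  have hmemO : ∀ (y : V) (hy : y ≠ u), G.Adj w y → c ⟨w, hwU⟩ ⟨y, hy⟩ ∈ O := by
    intro y hy hadj
    rw [hOdef]
    exact Finset.mem_image.mpr
      ⟨⟨y, Finset.mem_erase.mpr ⟨hy, (SimpleGraph.mem_neighborFinset G w y).mpr hadj⟩⟩,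
        Finset.mem_attach _ _, rfl⟩
  obtain ⟨InW, hInWdef⟩ : ∃ S : Set (Fin (G.maxDegree + 2)),
      S = {col | ∃ y, (G.induce {x : V | x ≠ u}).Adj y ⟨w, hwU⟩ ∧ c y ⟨w, hwU⟩ = col} :=
    ⟨_, rfl⟩
  have hInW2 : InW.ncard ≤ 2 := by rw [hInWdef]; exact hc2 ⟨w, hwU⟩
  have hmemIn : ∀ (x : V) (hx : x ≠ u), G.Adj x w → c ⟨x, hx⟩ ⟨w, hwU⟩ ∈ InW := by
    intro x hx hadj
    rw [hInWdef]
    exact ⟨⟨x, hx⟩, hadj, rfl⟩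
  have hdisj : ∀ col ∈ InW, col ∉ (↑O : Set (Fin (G.maxDegree + 2))) := by
    intro col hcol hmem
    rw [hInWdef] at hcol
    obtain ⟨y, hyadj, hyc⟩ := hcol
    rw [hOdef] at hmem
    obtain ⟨x, hxmem, hxeq⟩ := Finset.mem_image.mp (by exact_mod_cast hmem)
    have hxw : G.Adj w x.1 := (SimpleGraph.mem_neighborFinset G w x.1).mp
      (Finset.mem_of_mem_erase x.2)
    have hne' : ((⟨w, hwU⟩ : ↥{x : V | x ≠ u}), (⟨x.1, (Finset.mem_erase.mp x.2).1⟩ : ↥{x : V | x ≠ u}))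
        ≠ (y, ⟨w, hwU⟩) := by
      intro heq
      rw [Prod.mk.injEq] at heq
      have hadj : G.Adj (y : V) w := hyadj
      rw [← heq.1] at hadj
      exact G.loopless.irrefl w hadj
    exact hc1 ⟨w, hwU⟩ ⟨x.1, (Finset.mem_erase.mp x.2).1⟩ y ⟨w, hwU⟩ hxw hyadj hne'
      (Or.inr (Or.inr rfl)) (hxeq.trans hyc.symm)
  have hklarge : ∀ n : ℕ, n ≤ G.maxDegree + 1 → n < G.maxDegree + 2 := by omega
  obtain ⟨a, haO, haIn⟩ :
      ∃ a : Fin (G.maxDegree + 2), a ∉ (↑O : Set (Fin (G.maxDegree + 2))) ∧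
        (insert a InW).ncard ≤ 2 := by
    by_cases hA : InW.Nonempty
    · obtain ⟨a, ha⟩ := hA
      refine ⟨a, hdisj a ha, ?_⟩
      rwa [Set.insert_eq_self.mpr ha]
    · rw [Set.not_nonempty_iff_eq_empty] at hA
      obtain ⟨a, ha⟩ := exists_not_mem_of_ncard_lt (↑O : Set (Fin (G.maxDegree + 2))) (by
        rw [Set.ncard_coe_finset]
        exact hklarge O.card (by omega))
      refine ⟨a, ha, ?_⟩
      rw [hA]
      simp
  obtain ⟨b, hb⟩ := exists_not_mem_of_ncard_lt
      ((↑O : Set (Fin (G.maxDegree + 2))) ∪ insert a InW) (by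
    apply lt_of_le_of_lt (Set.ncard_union_le _ _)
    rw [Set.ncard_coe_finset]
    exact hklarge _ (by omega))
  have hbO : b ∉ (↑O : Set (Fin (G.maxDegree + 2))) := fun hmem => hb (Or.inl hmem)
  have hba : b ≠ a := fun hmem => hb (Or.inr (Set.mem_insert_iff.mpr (Or.inl hmem)))
  have hbIn : b ∉ InW := fun hmem => hb (Or.inr (Set.mem_insert_iff.mpr (Or.inr hmem)))
  obtain ⟨q, hq⟩ := exists_not_mem_of_ncard_lt ({α, a, β} : Set (Fin (G.maxDegree + 2))) (by
    apply hklarge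
    have h1 := Set.ncard_insert_le α ({a, β} : Set (Fin (G.maxDegree + 2)))
    have h2 := Set.ncard_insert_le a ({β} : Set (Fin (G.maxDegree + 2)))
    simp [Set.ncard_singleton] at h1 h2
    omega)
  have hqα : q ≠ α := fun h => hq (by simp [h])
  have hqa : q ≠ a := fun h => hq (by simp [h])
  have hqβ : q ≠ β := fun h => hq (by simp [h])
  obtain ⟨p, hp⟩ := exists_not_mem_of_ncard_lt ({a, q, b, α} : Set (Fin (G.maxDegree + 2))) (by
    apply hklarge
    have h1 := Set.ncard_insert_le a ({q, b, α} : Set (Fin (G.maxDegree + 2)))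
    have h2 := Set.ncard_insert_le q ({b, α} : Set (Fin (G.maxDegree + 2)))
    have h3 := Set.ncard_insert_le b ({α} : Set (Fin (G.maxDegree + 2)))
    simp [Set.ncard_singleton] at h1 h2 h3
    omega)
  have hpa : p ≠ a := fun h => hp (by simp [h])
  have hpq : p ≠ q := fun h => hp (by simp [h])
  have hpb : p ≠ b := fun h => hp (by simp [h])
  have hpα : p ≠ α := fun h => hp (by simp [h])
  obtain ⟨c', e1, e2, e3, e4, e5⟩ :
      ∃ c' : V → V → Fin (G.maxDegree + 2), c' u v = p ∧ c' u w = a ∧ c' v u = q ∧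
        c' w u = b ∧ ∀ (x y : V) (hx : x ≠ u) (hy : y ≠ u), c' x y = c ⟨x, hx⟩ ⟨y, hy⟩ := by
    refine ⟨fun x y =>
      if hx : x = u then (if y = v then p else a)
      else if hy : y = u then (if x = v then q else b)
      else c ⟨x, hx⟩ ⟨y, hy⟩, ?_, ?_, ?_, ?_, ?_⟩
    · simp
    · simp [hwv]
    · simp [hvu]
    · simp [hwu, hwv]
    · intro x y hx hy; simp [hx, hy]
  refine ⟨c', ?_, ?_⟩
  · -- properness
    intro x y x' y' hxy hx'y' hne hrel
    by_cases hx : x = u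
    · obtain rfl := hx.symm
      rcases hNu y hxy with h | h
      · obtain rfl := h.symm
        -- first incidence (u, v), color p
        rw [e1]
        by_cases hx' : x' = u
        · obtain rfl := hx'.symm
          rcases hNu y' hx'y' with h' | h'
          · obtain rfl := h'.symm
            exact absurd rfl hne
          · obtain rfl := h'.symm
            rw [e2]; exact hpa
        · by_cases hy' : y' = u
          · obtain rfl := hy'.symm
            rcases hNu x' hx'y'.symm with h' | h'
            · obtain rfl := h'.symm
              rw [e3]; exact hpq
            · obtain rfl := h'.symm
              rw [e4]; exact hpb
          · rcases hrel with h' | h' | h'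
            · exact absurd h'.symm hx'
            · obtain rfl := h'
              rcases hNv y' hx'y' with h'' | h''
              · exact absurd h'' hy'
              · obtain rfl := h''.symm
                rw [e5 v z hvu hzu, ← hα]; exact hpα
            · exact absurd h'.symm hy'
      · obtain rfl := h.symm
        -- first incidence (u, w), color a
        rw [e2]
        by_cases hx' : x' = u
        · obtain rfl := hx'.symm
          rcases hNu y' hx'y' with h' | h'
          · obtain rfl := h'.symm
            rw [e1]; exact hpa.symm
          · obtain rfl := h'.symm
            exact absurd rfl hne
        · by_cases hy' : y' = u
          · obtain rfl := hy'.symm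
            rcases hNu x' hx'y'.symm with h' | h'
            · obtain rfl := h'.symm
              rw [e3]; exact hqa.symm
            · obtain rfl := h'.symm
              rw [e4]; exact hba.symm
          · rcases hrel with h' | h' | h'
            · exact absurd h'.symm hx'
            · obtain rfl := h'
              rw [e5 w y' hwu hy']
              exact fun heq => haO (heq ▸ hmemO y' hy' hx'y')
            · exact absurd h'.symm hy'
    · by_cases hy : y = u
      · obtain rfl := hy.symm
        rcases hNu x hxy.symm with h | h
        · obtain rfl := h.symm
          -- first incidence (v, u), color q
          rw [e3]
          by_cases hx' : x' = u
          · obtain rfl := hx'.symm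
            rcases hNu y' hx'y' with h' | h'
            · obtain rfl := h'.symm
              rw [e1]; exact hpq.symm
            · obtain rfl := h'.symm
              rw [e2]; exact hqa
          · by_cases hy' : y' = u
            · obtain rfl := hy'.symm
              rcases hNu x' hx'y'.symm with h' | h'
              · obtain rfl := h'.symm
                exact absurd rfl hne
              · obtain rfl := h'.symm
                rcases hrel with h' | h' | h'
                · exact absurd h' hwv.symm
                · exact absurd h' hwu.symm
                · exact absurd h' hvu
            · rcases hrel with h' | h' | h'
              · obtain rfl := h'
                rcases hNv y' hx'y' with h'' | h''
                · exact absurd h'' hy'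
                · obtain rfl := h''.symm
                  rw [e5 v z hvu hzu, ← hα]; exact hqα
              · exact absurd h'.symm hx'
              · obtain rfl := h'
                rcases hNv x' hx'y'.symm with h'' | h''
                · exact absurd h'' hx'
                · obtain rfl := h''.symm
                  rw [e5 z v hzu hvu, ← hβ]; exact hqβ
        · obtain rfl := h.symm
          -- first incidence (w, u), color b
          rw [e4]
          by_cases hx' : x' = u
          · obtain rfl := hx'.symm
            rcases hNu y' hx'y' with h' | h'
            · obtain rfl := h'.symm
              rw [e1]; exact hpb.symm
            · obtain rfl := h'.symm
              rw [e2]; exact hba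
          · by_cases hy' : y' = u
            · obtain rfl := hy'.symm
              rcases hNu x' hx'y'.symm with h' | h'
              · obtain rfl := h'.symm
                rcases hrel with h' | h' | h'
                · exact absurd h' hwv
                · exact absurd h' hvu.symm
                · exact absurd h' hwu
              · obtain rfl := h'.symm
                exact absurd rfl hne
            · rcases hrel with h' | h' | h'
              · obtain rfl := h'
                rw [e5 w y' hwu hy']
                exact fun heq => hbO (heq ▸ hmemO y' hy' hx'y')
              · exact absurd h'.symm hx'
              · obtain rfl := h'
                rw [e5 x' w hx' hwu]
                exact fun heq => hbIn (heq ▸ hmemIn x' hx' hx'y')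
      · -- first incidence old
        rw [e5 x y hx hy]
        by_cases hx' : x' = u
        · obtain rfl := hx'.symm
          rcases hNu y' hx'y' with h' | h'
          · obtain rfl := h'.symm
            rw [e1]
            rcases hrel with h' | h' | h'
            · exact absurd h' hx
            · exact absurd h' hy
            · obtain rfl := h'.symm
              rcases hNv y hxy with h'' | h''
              · exact absurd h'' hy
              · obtain rfl := h''.symm
                have : c ⟨v, hx⟩ ⟨z, hy⟩ = α := by rw [hα]
                rw [this]; exact hpα.symm
          · obtain rfl := h'.symm
            rw [e2]
            rcases hrel with h' | h' | h'
            · exact absurd h' hx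
            · exact absurd h' hy
            · obtain rfl := h'.symm
              exact fun heq => haO (heq.symm ▸ hmemO y hy hxy)
        · by_cases hy' : y' = u
          · obtain rfl := hy'.symm
            rcases hNu x' hx'y'.symm with h' | h'
            · obtain rfl := h'.symm
              rw [e3]
              rcases hrel with h' | h' | h'
              · obtain rfl := h'.symm
                rcases hNv y hxy with h'' | h''
                · exact absurd h'' hy
                · obtain rfl := h''.symm
                  have : c ⟨v, hx⟩ ⟨z, hy⟩ = α := by rw [hα]
                  rw [this]; exact hqα.symm
              · obtain rfl := h'.symm
                rcases hNv x hxy.symm with h'' | h''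
                · exact absurd h'' hx
                · obtain rfl := h''.symm
                  have : c ⟨z, hx⟩ ⟨v, hy⟩ = β := by rw [hβ]
                  rw [this]; exact hqβ.symm
              · exact absurd h' hx
            · obtain rfl := h'.symm
              rw [e4]
              rcases hrel with h' | h' | h'
              · obtain rfl := h'.symm
                exact fun heq => hbO (heq.symm ▸ hmemO y hy hxy)
              · obtain rfl := h'.symm
                exact fun heq => hbIn (heq.symm ▸ hmemIn x hx hxy)
              · exact absurd h' hx
          · rw [e5 x' y' hx' hy']
            refine hc1 ⟨x, hx⟩ ⟨y, hy⟩ ⟨x', hx'⟩ ⟨y', hy'⟩ hxy hx'y' ?_ ?_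
            · intro heq
              rw [Prod.mk.injEq] at heq
              apply hne
              rw [Prod.mk.injEq]
              exact ⟨congrArg Subtype.val heq.1, congrArg Subtype.val heq.2⟩
            · rcases hrel with h' | h' | h'
              · exact Or.inl (Subtype.ext h')
              · exact Or.inr (Or.inl (Subtype.ext h'))
              · exact Or.inr (Or.inr (Subtype.ext h'))
  · -- incoming color count
    intro t
    by_cases htu : t = u
    · obtain rfl := htu.symm
      have hsub : {col : Fin (G.maxDegree + 2) | ∃ s, G.Adj s u ∧ c' s u = col} ⊆ {q, b} := by
        rintro col ⟨s, hs, rfl⟩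
        rcases hNu s hs.symm with h | h
        · obtain rfl := h.symm
          rw [e3]; exact Set.mem_insert _ _
        · obtain rfl := h.symm
          rw [e4]; exact Set.mem_insert_of_mem _ rfl
      refine le_trans (Set.ncard_le_ncard hsub (Set.toFinite _)) ?_
      refine le_trans (Set.ncard_insert_le _ _) ?_
      simp [Set.ncard_singleton]
    · by_cases htv : t = v
      · obtain rfl := htv.symm
        have hsub : {col : Fin (G.maxDegree + 2) | ∃ s, G.Adj s v ∧ c' s v = col} ⊆ {p, β} := by
          rintro col ⟨s, hs, rfl⟩
          rcases hNv s hs.symm with h | h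
          · obtain rfl := h.symm
            rw [e1]; exact Set.mem_insert _ _
          · obtain rfl := h.symm
            rw [e5 z v hzu hvu, ← hβ]; exact Set.mem_insert_of_mem _ rfl
        refine le_trans (Set.ncard_le_ncard hsub (Set.toFinite _)) ?_
        refine le_trans (Set.ncard_insert_le _ _) ?_
        simp [Set.ncard_singleton]
      · by_cases htw : t = w
        · obtain rfl := htw.symm
          have hsub : {col : Fin (G.maxDegree + 2) | ∃ s, G.Adj s w ∧ c' s w = col}
              ⊆ insert a InW := by
            rintro col ⟨s, hs, rfl⟩
            by_cases hsu : s = u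
            · obtain rfl := hsu.symm
              rw [e2]; exact Set.mem_insert _ _
            · rw [e5 s w hsu hwu]
              exact Set.mem_insert_of_mem _ (hmemIn s hsu hs)
          exact le_trans (Set.ncard_le_ncard hsub (Set.toFinite _)) haIn
        · have hsub : {col : Fin (G.maxDegree + 2) | ∃ s, G.Adj s t ∧ c' s t = col} ⊆
              {col : Fin (G.maxDegree + 2) |
                ∃ s, (G.induce {x : V | x ≠ u}).Adj s ⟨t, htu⟩ ∧ c s ⟨t, htu⟩ = col} := by
            rintro col ⟨s, hs, rfl⟩
            have hsu : s ≠ u := by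
              rintro rfl
              rcases hNu t hs with h | h
              · exact htv h
              · exact htw h
            rw [e5 s t hsu htu]
            exact ⟨⟨s, hsu⟩, hs, rfl⟩
          exact le_trans (Set.ncard_le_ncard hsub (Set.toFinite _)) (hc2 ⟨t, htu⟩)
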